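/- Let \lambda be a partition with at most n parts and let \lambda' be its conjugate partition (so \lambda'_l = \#\{i : \lambda_i \geq l\}). Then \prod_{1 \leq j < k \leq n} w^-_{jk} = [n]_t! / \prod_{l \geq 0} [\lambda'_l - \lambda'_{l+1}]_t!, where w^-_{jk} = (1-t^{k-j+1})/(1-t^{k-j}) if \lambda_j \neq \lambda_k and w^-_{jk} = 1 if \lambda_j = \lambda_k, with the convention \lambda'_0 = n, and [m]_t! = \prod_{j=1}^m (1-t^j)/(1-t). -/
import Mathlib


/-- The conjugate partition: `λ'_l = #{i : λ_i ≥ l}` (so `λ'_0 = n`). -/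
def conjP (n : ℕ) (lam : Fin n → ℕ) (l : ℕ) : ℕ :=
  (Finset.univ.filter fun i => l ≤ lam i).card

/-- The t-factorial `[m]_t! = ∏_{j=1}^m (1-t^j)/(1-t)`. -/
noncomputable def tFact {F : Type*} [Field F] (t : F) (m : ℕ) : F :=
  ∏ j ∈ Finset.range m, (1 - t ^ (j + 1)) / (1 - t)

lemma telescope {F : Type*} [Field F] (t : F) (K : ℕ)
    (ht : ∀ d, 1 ≤ d → d ≤ K + 1 → (1 : F) - t ^ d ≠ 0) :
    ∀ m, m ≤ K → ∏ j ∈ Finset.range m, (1 - t ^ (K - j + 1)) / (1 - t ^ (K - j))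
      = (1 - t ^ (K + 1)) / (1 - t ^ (K - m + 1)) := by
  intro m
  induction m with
  | zero =>
      intro _
      simp [Nat.sub_zero, div_self (ht (K+1) (by omega) le_rfl)]
  | succ m ih =>
      intro hm
      rw [Finset.prod_range_succ, ih (by omega)]
      have hKm : K - m = K - (m+1) + 1 := by omega
      have hb : (1:F) - t ^ (K - m + 1) ≠ 0 := ht _ (by omega) (by omega)
      have hc : (1:F) - t ^ (K - m) ≠ 0 := ht _ (by omega) (by omega)
      rw [← hKm]
      field_simp

lemma dc_eq_range (A : Finset ℕ) (h : ∀ i j : ℕ, i ≤ j → j ∈ A → i ∈ A) :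
    A = Finset.range A.card := by
  rcases A.eq_empty_or_nonempty with rfl | hne
  · simp
  · have hA : A = Finset.range (A.max' hne + 1) := by
      ext x
      simp only [Finset.mem_range, Nat.lt_succ_iff]
      exact ⟨fun hx => A.le_max' x hx, fun hx => h x _ hx (A.max'_mem hne)⟩
    rw [hA, Finset.card_range]

lemma myRankProd {α M : Type*} [LinearOrder α] [CommMonoid M] (f : ℕ → M) (S : Finset α) :
    ∏ k ∈ S, f ((S.filter (· < k)).card) = ∏ r ∈ Finset.range S.card, f r := by
  classical
  induction S using Finset.strongInduction with
  | _ S ih =>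
    rcases S.eq_empty_or_nonempty with rfl | hne
    · simp
    · have hM := S.max'_mem hne
      have hfilter : S.filter (· < S.max' hne) = S.erase (S.max' hne) := by
        ext x
        simp only [Finset.mem_filter, Finset.mem_erase]
        exact ⟨fun ⟨hx, hlt⟩ => ⟨ne_of_lt hlt, hx⟩,
          fun ⟨hne', hx⟩ => ⟨hx, lt_of_le_of_ne (S.le_max' x hx) hne'⟩⟩
      have hsub : S.erase (S.max' hne) ⊂ S := Finset.erase_ssubset hM
      have hcard : (S.erase (S.max' hne)).card = S.card - 1 := Finset.card_erase_of_mem hM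
      have hrank : ∀ k ∈ S.erase (S.max' hne),
          f ((S.filter (· < k)).card) = f (((S.erase (S.max' hne)).filter (· < k)).card) := by
        intro k hk
        rw [Finset.filter_erase, Finset.erase_eq_of_notMem]
        simp only [Finset.mem_filter, not_and]
        intro _
        exact not_lt.mpr (S.le_max' k (Finset.mem_of_mem_erase hk))
      rw [← Finset.mul_prod_erase S _ hM, hfilter, hcard,
        Finset.prod_congr rfl hrank, ih _ hsub, hcard]
      have hc : S.card = (S.card - 1) + 1 := by
        have := Finset.card_pos.mpr hne; omega
      rw [hc, Finset.prod_range_succ, mul_comm]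
      congr 1

lemma conjP_diff (n : ℕ) (lam : Fin n → ℕ) (l : ℕ) :
    conjP n lam l - conjP n lam (l+1) = (Finset.univ.filter fun i => lam i = l).card := by
  show (Finset.univ.filter fun i : Fin n => l ≤ lam i).card
      - (Finset.univ.filter fun i : Fin n => l + 1 ≤ lam i).card = _
  have hsub : (Finset.univ.filter fun i : Fin n => l + 1 ≤ lam i)
      ⊆ (Finset.univ.filter fun i : Fin n => l ≤ lam i) := by
    intro i hi
    simp only [Finset.mem_filter, Finset.mem_univ, true_and] at *
    omega
  rw [← Finset.card_sdiff_of_subset hsub]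
  congr 1
  ext i
  simp only [Finset.mem_sdiff, Finset.mem_filter, Finset.mem_univ, true_and]
  omega


/-- `∏_{1≤j<k≤n} w⁻_{jk} = [n]_t! / ∏_{l≥0} [λ'_l - λ'_{l+1}]_t!`,
where `w⁻_{jk} = (1-t^{k-j+1})/(1-t^{k-j})` if `λ_j ≠ λ_k` and `1` otherwise. -/
theorem wminus_product_eq_tMultinomial {F : Type*} [Field F] (t : F)
    (n : ℕ) (hn : 1 ≤ n) (lam : Fin n → ℕ)
    (hmono : ∀ i j : Fin n, i ≤ j → lam j ≤ lam i)
    (ht : ∀ m : ℕ, 1 ≤ m → m ≤ n → (1 : F) - t ^ m ≠ 0) :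
    (∏ p ∈ Finset.univ.filter (fun p : Fin n × Fin n => p.1 < p.2),
        if lam p.1 = lam p.2 then (1 : F)
        else (1 - t ^ ((p.2 : ℕ) - (p.1 : ℕ) + 1)) / (1 - t ^ ((p.2 : ℕ) - (p.1 : ℕ))))
      = tFact t n /
        ∏ l ∈ Finset.range ((∑ i, lam i) + 1),
          tFact t (conjP n lam l - conjP n lam (l + 1)) := by
  classical
  -- c k = number of j < k with lam j = lam k (rank of k within its block)
  set c : Fin n → ℕ :=
    fun k => (Finset.univ.filter fun j : Fin n => lam j = lam k ∧ j < k).card with hcdef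
  -- the set of j < k with lam j ≠ lam k, and its cardinality
  set A : Fin n → Finset (Fin n) :=
    fun k => Finset.univ.filter fun j : Fin n => j < k ∧ ¬ lam j = lam k with hAdef
  have hIio : ∀ k : Fin n, (Finset.univ.filter fun j : Fin n => j < k).card = (k : ℕ) := by
    intro k
    have himg : (Finset.univ.filter fun j : Fin n => j < k).image Fin.val
        = Finset.range (k : ℕ) := by
      ext x
      simp only [Finset.mem_image, Finset.mem_filter, Finset.mem_univ, true_and,
        Finset.mem_range, Fin.lt_def]
      constructor
      · rintro ⟨j, hj, rfl⟩; exact hj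
      · intro hx; exact ⟨⟨x, lt_trans hx k.isLt⟩, hx, rfl⟩
    rw [← Finset.card_range (k : ℕ), ← himg,
      Finset.card_image_of_injective _ Fin.val_injective]
  have hsplit : ∀ k : Fin n, (A k).card + c k = (k : ℕ) := by
    intro k
    rw [← hIio k]
    have hunion : (Finset.univ.filter fun j : Fin n => j < k)
        = A k ∪ (Finset.univ.filter fun j : Fin n => lam j = lam k ∧ j < k) := by
      ext j
      simp only [hAdef, Finset.mem_union, Finset.mem_filter, Finset.mem_univ, true_and]
      tauto
    have hdisj : Disjoint (A k) (Finset.univ.filter fun j : Fin n => lam j = lam k ∧ j < k) := by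
      rw [Finset.disjoint_left]
      intro j hj hj'
      simp only [hAdef, Finset.mem_filter, Finset.mem_univ, true_and] at hj hj'
      tauto
    rw [hunion, Finset.card_union_of_disjoint hdisj]
  have hck : ∀ k : Fin n, c k ≤ (k : ℕ) := fun k => by have := hsplit k; omega
  have he : (1 : F) - t ≠ 0 := by simpa using ht 1 le_rfl hn
  -- value of tFact t n
  have hT : tFact t n = ∏ k : Fin n, (1 - t ^ ((k : ℕ) + 1)) / (1 - t) :=
    (Fin.prod_univ_eq_prod_range (fun j => (1 - t ^ (j + 1)) / (1 - t)) n).symm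
  -- value of the denominator
  have hD : (∏ l ∈ Finset.range ((∑ i, lam i) + 1),
        tFact t (conjP n lam l - conjP n lam (l + 1)))
      = ∏ k : Fin n, (1 - t ^ (c k + 1)) / (1 - t) := by
    calc (∏ l ∈ Finset.range ((∑ i, lam i) + 1),
            tFact t (conjP n lam l - conjP n lam (l + 1)))
        = ∏ l ∈ Finset.range ((∑ i, lam i) + 1),
            ∏ k ∈ Finset.univ.filter (fun i : Fin n => lam i = l),
              (1 - t ^ ((((Finset.univ.filter fun i : Fin n => lam i = l).filter
                (· < k)).card) + 1)) / (1 - t) := by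
          refine Finset.prod_congr rfl fun l _ => ?_
          rw [conjP_diff n lam l]
          exact (myRankProd (fun r => (1 - t ^ (r + 1)) / (1 - t)) _).symm
      _ = ∏ l ∈ Finset.range ((∑ i, lam i) + 1),
            ∏ k ∈ Finset.univ.filter (fun i : Fin n => lam i = l),
              (1 - t ^ (c k + 1)) / (1 - t) := by
          refine Finset.prod_congr rfl fun l _ => Finset.prod_congr rfl fun k hk => ?_
          simp only [Finset.mem_filter, Finset.mem_univ, true_and] at hk
          have hfk : (Finset.univ.filter fun i : Fin n => lam i = l).filter (· < k)
              = Finset.univ.filter fun j : Fin n => lam j = lam k ∧ j < k := by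
            rw [Finset.filter_filter]
            ext j
            simp only [Finset.mem_filter, Finset.mem_univ, true_and, hk]
          rw [hfk]
      _ = ∏ k : Fin n, (1 - t ^ (c k + 1)) / (1 - t) := by
          refine Finset.prod_fiberwise_of_maps_to (fun k _ => ?_) _
          simp only [Finset.mem_range]
          have : lam k ≤ ∑ i, lam i :=
            Finset.single_le_sum (fun i _ => Nat.zero_le _) (Finset.mem_univ k)
          omega
  rw [Finset.prod_filter, Fintype.prod_prod_type, Finset.prod_comm]
  trans (∏ k : Fin n, (1 - t ^ ((k : ℕ) + 1)) / (1 - t ^ (c k + 1)))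
  · refine Finset.prod_congr rfl fun k _ => ?_
    trans (∏ j ∈ A k, (1 - t ^ ((k : ℕ) - (j : ℕ) + 1)) / (1 - t ^ ((k : ℕ) - (j : ℕ))))
    · rw [hAdef, Finset.prod_filter]
      refine Finset.prod_congr rfl fun j _ => ?_
      by_cases h1 : j < k <;> by_cases h2 : lam j = lam k <;> simp [h1, h2]
    · -- image of A k under val is an initial segment
      have hdc : ∀ i j : ℕ, i ≤ j → j ∈ (A k).image Fin.val → i ∈ (A k).image Fin.val := by
        intro i j hij hj
        simp only [hAdef, Finset.mem_image, Finset.mem_filter, Finset.mem_univ,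
          true_and] at hj ⊢
        obtain ⟨j', ⟨hjk, hne'⟩, rfl⟩ := hj
        have hik : i < (k : ℕ) := lt_of_le_of_lt hij hjk
        refine ⟨⟨i, lt_trans hik k.isLt⟩, ⟨hik, fun heq => hne' ?_⟩, rfl⟩
        have h1 : lam k ≤ lam j' := hmono j' k (le_of_lt hjk)
        have h2 : lam j' ≤ lam ⟨i, lt_trans hik k.isLt⟩ := hmono _ j' hij
        omega
      have himage : (A k).image Fin.val = Finset.range ((A k).card) := by
        have := dc_eq_range ((A k).image Fin.val) hdc
        rwa [Finset.card_image_of_injective _ Fin.val_injective] at this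
      have hcardA : (A k).card ≤ (k : ℕ) := by have := hsplit k; omega
      have hprod : (∏ j ∈ A k, (1 - t ^ ((k : ℕ) - (j : ℕ) + 1)) / (1 - t ^ ((k : ℕ) - (j : ℕ))))
          = ∏ r ∈ Finset.range (A k).card,
              (1 - t ^ ((k : ℕ) - r + 1)) / (1 - t ^ ((k : ℕ) - r)) := by
        rw [← himage, Finset.prod_image (fun x _ y _ h => Fin.val_injective h)]
      rw [hprod, telescope t (k : ℕ)
        (fun d h1 h2 => ht d h1 (by have := k.isLt; omega)) (A k).card hcardA]
      have hce : (k : ℕ) - (A k).card + 1 = c k + 1 := by have := hsplit k; omega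
      rw [hce]
  · rw [hT, hD, ← Finset.prod_div_distrib]
    refine Finset.prod_congr rfl fun k _ => ?_
    have hE : (1 : F) - t ^ (c k + 1) ≠ 0 :=
      ht _ (by omega) (by have := hck k; have := k.isLt; omega)
    field_simp
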